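/- Let (B, Ω) be a model, let G(B) be the DAG with an edge j → i whenever B_{ij} ≠ 0, and let 𝒟 be a DAG on [p] that has the same skeleton and the same v-structures as G(B) (i.e., 𝒟 is Markov equivalent to G(B)). Then there exist a matrix B' compatible with 𝒟 and a diagonal matrix Ω' with positive diagonal entries such that (I−B)⁻¹ Ω (I−B)⁻ᵀ = (I−B')⁻¹ Ω' (I−B')⁻ᵀ. -/

import Mathlib

open Matrix

/-- A matrix is a DAG (connectivity) matrix if it is strictly lower triangular up to a
simultaneous permutation of rows and columns (in particular it has zero diagonal). -/
def IsDagMatrix {p : ℕ} (B : Matrix (Fin p) (Fin p) ℝ) : Prop :=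
  ∃ σ : Equiv.Perm (Fin p), ∀ i j : Fin p, σ i ≤ σ j → B i j = 0

/-- A noise-variance matrix: diagonal with positive diagonal entries. -/
def DiagPos {p : ℕ} (Ω : Matrix (Fin p) (Fin p) ℝ) : Prop :=
  Ω.IsDiag ∧ ∀ i, 0 < Ω i i

/-- The covariance matrix `(I − B)⁻¹ Ω (I − B)⁻ᵀ` entailed by the model `(B, Ω)`. -/
noncomputable def CovOf {p : ℕ} (B Ω : Matrix (Fin p) (Fin p) ℝ) : Matrix (Fin p) (Fin p) ℝ :=
  (1 - B)⁻¹ * Ω * ((1 - B)⁻¹)ᵀ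

/-- A directed graph on `[p]` (given as its edge relation, `D a b` meaning `a → b`)
is acyclic if it has no directed cycles. -/
def IsAcyclic {p : ℕ} (D : Fin p → Fin p → Prop) : Prop :=
  ∀ i, ¬ Relation.TransGen D i i

/-- The graph `G(B)` underlying a connectivity matrix `B`: an edge `j → i` whenever
`B i j ≠ 0`. -/
def graphOf {p : ℕ} (B : Matrix (Fin p) (Fin p) ℝ) : Fin p → Fin p → Prop :=
  fun j i => B i j ≠ 0

/-- A matrix `B` is compatible with a graph `D` (written `B ∼ D`) if `B i j ≠ 0`
implies that `j → i` is an edge of `D`. -/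
def Compatible {p : ℕ} (B : Matrix (Fin p) (Fin p) ℝ) (D : Fin p → Fin p → Prop) : Prop :=
  ∀ i j, B i j ≠ 0 → D j i

/-- Two directed graphs have the same skeleton: the same adjacencies ignoring direction. -/
def SameSkeleton {V : Type*} (D D' : V → V → Prop) : Prop :=
  ∀ a b, (D a b ∨ D b a) ↔ (D' a b ∨ D' b a)

/-- `(i, k, j)` is a v-structure: edges `i → k` and `j → k` with `i ≠ j` and `i, j`
non-adjacent. -/
def IsVStruct {V : Type*} (D : V → V → Prop) (i k j : V) : Prop :=
  D i k ∧ D j k ∧ i ≠ j ∧ ¬ D i j ∧ ¬ D j i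

/-- Two directed graphs have the same v-structures. -/
def SameVStructs {V : Type*} (D D' : V → V → Prop) : Prop :=
  ∀ i k j, IsVStruct D i k j ↔ IsVStruct D' i k j

/-- `𝓘`-equivalence of two DAGs: same skeleton, same v-structures, and the same parents
for every node in `𝓘`. -/
def IEquiv {p : ℕ} (I : Set (Fin p)) (D D' : Fin p → Fin p → Prop) : Prop :=
  SameSkeleton D D' ∧ SameVStructs D D' ∧ ∀ i ∈ I, ∀ j, D j i ↔ D' j i

namespace MEQ
open Relation

section Infra
variable {V : Type} [Fintype V] [DecidableEq V]

noncomputable def mcov (B Ω : Matrix V V ℝ) : Matrix V V ℝ := (1 - B)⁻¹ * Ω * ((1 - B)⁻¹)ᵀ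
def mcompat (B : Matrix V V ℝ) (G : V → V → Prop) : Prop := ∀ i j, B i j ≠ 0 → G j i
def macyc (G : V → V → Prop) : Prop := ∀ i, ¬ Relation.TransGen G i i
def mdpos (Ω : Matrix V V ℝ) : Prop := Ω.IsDiag ∧ ∀ i, 0 < Ω i i

lemma pow_chain (B : Matrix V V ℝ) :
    ∀ (m : ℕ) (i j : V), (B ^ m) i j ≠ 0 →
      ∃ f : ℕ → V, f 0 = i ∧ f m = j ∧ ∀ x < m, B (f x) (f (x+1)) ≠ 0 := by
  intro m
  induction m with
  | zero =>
    intro i j h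
    refine ⟨fun _ => i, rfl, ?_, by omega⟩
    by_contra hij
    rw [pow_zero, Matrix.one_apply_ne (fun hh => hij hh)] at h
    exact h rfl
  | succ n ih =>
    intro i j h
    rw [pow_succ, Matrix.mul_apply] at h
    obtain ⟨k, hk⟩ : ∃ k, (B ^ n) i k * B k j ≠ 0 := by
      by_contra hc
      push_neg at hc
      exact h (Finset.sum_eq_zero fun k _ => hc k)
    have h1 : (B ^ n) i k ≠ 0 := fun hh => hk (by simp [hh])
    have h2 : B k j ≠ 0 := fun hh => hk (by simp [hh])
    obtain ⟨f, hf0, hfn, hstep⟩ := ih i k h1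
    refine ⟨fun x => if x ≤ n then f x else j, by simp [hf0], by simp, ?_⟩
    intro x hx
    rcases Nat.lt_or_ge x n with hxn | hxn
    · simpa [Nat.le_of_lt hxn, Nat.succ_le_of_lt hxn] using hstep x hxn
    · have hxe : x = n := by omega
      subst hxe
      simpa [hfn] using h2

lemma nilpotent_of_compat {B : Matrix V V ℝ} {G : V → V → Prop}
    (hG : macyc G) (hc : mcompat B G) : IsNilpotent B := by
  refine ⟨Fintype.card V, ?_⟩
  ext i j
  by_contra h
  obtain ⟨f, hf0, hfn, hstep⟩ := pow_chain B (Fintype.card V) i j h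
  -- f restricted to Fin (card V + 1) is not injective
  obtain ⟨x, y, hxy, hfe⟩ :=
    Fintype.exists_ne_map_eq_of_card_lt (fun x : Fin (Fintype.card V + 1) => f x.1)
      (by simp)
  -- wlog x < y
  have key : ∀ u v : ℕ, u < v → v ≤ Fintype.card V → TransGen G (f v) (f u) := by
    intro u v huv hvle
    clear hfe hxy
    induction v with
    | zero => omega
    | succ w ihw =>
      have hstepw : G (f (w+1)) (f w) := hc _ _ (hstep w (by omega))
      rcases Nat.lt_or_ge u w with hu | hu
      · exact (ihw hu (by omega)).head hstepw
      · have : u = w := by omega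
        subst this
        exact TransGen.single hstepw
  rcases Ne.lt_or_gt (fun h : x = y => hxy h) with hlt | hlt
  · have := key x.1 y.1 hlt (by omega)
    rw [hfe] at this
    exact hG _ this
  · have := key y.1 x.1 hlt (by omega)
    rw [← hfe] at this
    exact hG _ this

lemma isUnit_one_sub_of_compat {B : Matrix V V ℝ} {G : V → V → Prop}
    (hG : macyc G) (hc : mcompat B G) : IsUnit (1 - B) :=
  (nilpotent_of_compat hG hc).isUnit_one_sub

lemma diag_zero_of_compat {B : Matrix V V ℝ} {G : V → V → Prop}
    (hG : macyc G) (hc : mcompat B G) (i : V) : B i i = 0 := by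
  by_contra h
  exact hG i (TransGen.single (hc i i h))

/-- conjugation lemma -/
lemma mcov_conj {B Ω M : Matrix V V ℝ} (hB : IsUnit (1 - B)) (hM : IsUnit M) :
    mcov (1 - M * (1 - B)) (M * Ω * Mᵀ) = mcov B Ω := by
  have hMd : IsUnit M.det := (Matrix.isUnit_iff_isUnit_det M).1 hM
  unfold mcov
  rw [sub_sub_cancel, Matrix.mul_inv_rev]
  have h1 : M⁻¹ * (M * Ω * Mᵀ) = Ω * Mᵀ := by
    rw [Matrix.mul_assoc M, ← Matrix.mul_assoc M⁻¹,
      Matrix.nonsing_inv_mul M hMd, Matrix.one_mul]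
  have h2 : Mᵀ * ((1 - B)⁻¹ * M⁻¹)ᵀ = ((1-B)⁻¹)ᵀ := by
    rw [Matrix.transpose_mul, ← Matrix.mul_assoc, ← Matrix.transpose_mul,
      Matrix.nonsing_inv_mul M hMd, Matrix.transpose_one, Matrix.one_mul]
  calc (1 - B)⁻¹ * M⁻¹ * (M * Ω * Mᵀ) * ((1 - B)⁻¹ * M⁻¹)ᵀ
      = (1 - B)⁻¹ * (M⁻¹ * (M * Ω * Mᵀ)) * ((1 - B)⁻¹ * M⁻¹)ᵀ := by
        rw [Matrix.mul_assoc ((1-B)⁻¹)]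
    _ = (1 - B)⁻¹ * Ω * (Mᵀ * ((1 - B)⁻¹ * M⁻¹)ᵀ) := by
        rw [h1]; rw [Matrix.mul_assoc ((1-B)⁻¹), Matrix.mul_assoc Ω, ← Matrix.mul_assoc ((1-B)⁻¹)]
    _ = (1 - B)⁻¹ * Ω * ((1 - B)⁻¹)ᵀ := by rw [h2]

end Infra


section Graph
variable {V : Type} [Fintype V] [DecidableEq V]


/-- the graph with covered edge a→b reversed -/
def grev (G : V → V → Prop) (a b : V) : V → V → Prop :=
  fun x y => (G x y ∧ ¬(x = a ∧ y = b)) ∨ (x = b ∧ y = a)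

variable {G : V → V → Prop} {a b : V}

omit [Fintype V] [DecidableEq V]

lemma rtg_union_split {r s : V → V → Prop} {x y : V}
    (h : ReflTransGen (fun u v => r u v ∨ s u v) x y) :
    ReflTransGen r x y ∨
      ∃ u v, ReflTransGen r x u ∧ s u v ∧ ReflTransGen (fun u v => r u v ∨ s u v) v y := by
  induction h using ReflTransGen.head_induction_on with
  | refl => exact Or.inl ReflTransGen.refl
  | head h' ht ih =>
    rcases h' with hr | hs
    · rcases ih with h1 | ⟨u, v, h1, h2, h3⟩
      · exact Or.inl (h1.head hr)
      · exact Or.inr ⟨u, v, h1.head hr, h2, h3⟩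
    · exact Or.inr ⟨_, _, ReflTransGen.refl, hs, ht⟩

lemma tg_union_split {r s : V → V → Prop} {x y : V}
    (h : TransGen (fun u v => r u v ∨ s u v) x y) :
    TransGen r x y ∨
      ∃ u v, s u v ∧ ReflTransGen (fun u v => r u v ∨ s u v) x u ∧
        ReflTransGen (fun u v => r u v ∨ s u v) v y := by
  induction h using TransGen.head_induction_on with
  | single h' =>
    rcases h' with hr | hs
    · exact Or.inl (TransGen.single hr)
    · exact Or.inr ⟨_, _, hs, ReflTransGen.refl, ReflTransGen.refl⟩
  | head h' ht ih =>
    rcases h' with hr | hs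
    · rcases ih with h1 | ⟨u, v, h1, h2, h3⟩
      · exact Or.inl (h1.head hr)
      · exact Or.inr ⟨u, v, h1, h2.head (Or.inl hr), h3⟩
    · exact Or.inr ⟨_, _, hs, ReflTransGen.refl, ht.to_reflTransGen⟩

section Covered
variable (hG : macyc G) (hab : G a b)
  (hc1 : ∀ x, G x a → G x b) (hc2 : ∀ y, G y b → y ≠ a → G y a)

include hG hab

lemma hne_ab : a ≠ b := fun h => hG a (TransGen.single (h ▸ hab))

include hc2 in
lemma grev_acyclic : macyc (grev G a b) := by
  intro i hi
  have hab' : a ≠ b := hne_ab hG hab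
  -- grev G a b = r ∪ s with r = G minus edge, s = single edge b→a
  have hsplit := tg_union_split (r := fun x y => G x y ∧ ¬(x = a ∧ y = b))
    (s := fun x y => x = b ∧ y = a) hi
  rcases hsplit with h1 | ⟨u, v, ⟨hu, hv⟩, h2, h3⟩
  · exact hG i (TransGen.mono (fun x y hxy => hxy.1) _ _ h1)
  · rw [hv] at h3; rw [hu] at h2
    -- path a ⇒ i ⇒ b in grev, so ReflTransGen grev a b
    have hpath : ReflTransGen (fun u v => (G u v ∧ ¬(u = a ∧ v = b)) ∨ (u = b ∧ v = a)) a b :=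
      h3.trans h2
    -- first-use split: pure-r path a to b exists
    have := rtg_union_split hpath
    have hr : ReflTransGen (fun x y => G x y ∧ ¬(x = a ∧ y = b)) a b := by
      rcases this with h | ⟨u, v, h4, ⟨hu, hv⟩, _⟩
      · exact h
      · exact hu ▸ h4
    -- extract last edge
    rcases (ReflTransGen.cases_tail hr) with heq | ⟨y, hy1, hy2⟩
    · exact hab' heq.symm
    · -- hy2 : G y b ∧ ¬(y = a ∧ b = b)
      have hyb : G y b := hy2.1
      have hya' : y ≠ a := fun h => hy2.2 ⟨h, rfl⟩
      have hya : G y a := hc2 y hyb hya'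
      have : TransGen G a a :=
        TransGen.tail' (ReflTransGen.mono (fun x y hxy => hxy.1) _ _ hy1) hya
      exact hG a this
end Covered

section Covered2
variable (hG : macyc G) (hab : G a b)

include hG hab in
lemma grev_skeleton : ∀ x y, (G x y ∨ G y x) ↔ (grev G a b x y ∨ grev G a b y x) := by
  intro x y
  have hab' : a ≠ b := hne_ab hG hab
  unfold grev
  constructor
  · rintro (h | h)
    · by_cases hx : x = a ∧ y = b
      · exact Or.inr (Or.inr ⟨hx.2, hx.1⟩)
      · exact Or.inl (Or.inl ⟨h, hx⟩)
    · by_cases hx : y = a ∧ x = b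
      · exact Or.inl (Or.inr ⟨hx.2, hx.1⟩)
      · exact Or.inr (Or.inl ⟨h, hx⟩)
  · rintro ((⟨h, _⟩ | ⟨hx, hy⟩) | (⟨h, _⟩ | ⟨hx, hy⟩))
    · exact Or.inl h
    · subst hx; subst hy; exact Or.inr hab
    · exact Or.inr h
    · subst hx; subst hy; exact Or.inl hab

variable (hc1 : ∀ x, G x a → G x b) (hc2 : ∀ y, G y b → y ≠ a → G y a)

include hG hab hc1 hc2 in
lemma grev_vstructs : ∀ i k j,
    (G i k ∧ G j k ∧ i ≠ j ∧ ¬ G i j ∧ ¬ G j i) ↔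
    (grev G a b i k ∧ grev G a b j k ∧ i ≠ j ∧ ¬ grev G a b i j ∧ ¬ grev G a b j i) := by
  intro i k j
  have hab' : a ≠ b := hne_ab hG hab
  have hba : ¬ G b a := fun h => hG a (TransGen.tail (TransGen.single hab) h)
  have hskel := grev_skeleton hG hab
  have hnadj : ∀ x y : V, (¬ G x y ∧ ¬ G y x) ↔ (¬ grev G a b x y ∧ ¬ grev G a b y x) := by
    intro x y
    constructor
    · intro ⟨h1, h2⟩
      have := (hskel x y).not
      constructor
      · intro hg; exact (this.1 (by tauto)) (Or.inl hg)
      · intro hg; exact (this.1 (by tauto)) (Or.inr hg)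
    · intro ⟨h1, h2⟩
      have := (hskel x y).not
      constructor
      · intro hg; exact (this.2 (by tauto)) (Or.inl hg)
      · intro hg; exact (this.2 (by tauto)) (Or.inr hg)
  constructor
  · rintro ⟨hik, hjk, hij, hn1, hn2⟩
    have hna := (hnadj i j).1 ⟨hn1, hn2⟩
    refine ⟨?_, ?_, hij, hna.1, hna.2⟩
    · -- grev G a b i k unless (i,k) = (a,b)
      by_cases hx : i = a ∧ k = b
      · -- then j → b = k, j ≠ a = i, so G j a, adj i j, contra
        exfalso
        obtain ⟨hia, hkb⟩ := hx
        exact hn2 (show G j i by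
          rw [hia]
          exact hc2 j (by rw [← hkb]; exact hjk) (fun h => hij (by rw [hia, h])))
      · exact Or.inl ⟨hik, hx⟩
    · by_cases hx : j = a ∧ k = b
      · exfalso
        obtain ⟨hja, hkb⟩ := hx
        exact hn1 (show G i j by
          rw [hja]
          exact hc2 i (by rw [← hkb]; exact hik) (fun h => hij (h.trans hja.symm)))
      · exact Or.inl ⟨hjk, hx⟩
  · rintro ⟨hik, hjk, hij, hn1, hn2⟩
    have hna := (hnadj i j).2 ⟨hn1, hn2⟩
    refine ⟨?_, ?_, hij, hna.1, hna.2⟩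
    · rcases hik with ⟨h, _⟩ | ⟨hib, hka⟩
      · exact h
      · -- i = b, k = a; j → a in grev with j ≠ i = b
        exfalso
        subst hib; subst hka
        rcases hjk with ⟨hja, hne⟩ | ⟨hjb, _⟩
        · -- G j k = G j a, so G j b, adjacent to i = b
          exact hna.2 (hc1 j hja)
        · exact hij hjb.symm
    · rcases hjk with ⟨h, _⟩ | ⟨hjb, hka⟩
      · exact h
      · exfalso
        subst hjb; subst hka
        rcases hik with ⟨hia, hne⟩ | ⟨hib, _⟩
        · exact hna.1 (hc1 i hia)
        · exact hij hib

end Covered2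

/-- From a sink t of D and a minimal child c of t in G, the edge t→c is covered in G. -/
lemma covered_of_minimal {D : V → V → Prop} {t c : V}
    (hG : macyc G) (hD : macyc D)
    (hskel : ∀ x y, (G x y ∨ G y x) ↔ (D x y ∨ D y x))
    (hvstr : ∀ i k j, (G i k ∧ G j k ∧ i ≠ j ∧ ¬ G i j ∧ ¬ G j i) ↔
      (D i k ∧ D j k ∧ i ≠ j ∧ ¬ D i j ∧ ¬ D j i))
    (hsink : ∀ j, ¬ D t j) (htc : G t c)
    (hmin : ∀ y, G t y → ¬ TransGen G y c) :
    (∀ x, G x t → G x c) ∧ (∀ y, G y c → y ≠ t → G y t) := by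
  have htc' : t ≠ c := fun h => hG t (TransGen.single (h ▸ htc))
  have hct : ¬ G c t := fun h => hG t ((TransGen.single htc).tail h)
  constructor
  · intro x hxt
    have hxc' : x ≠ c := fun h => hG t ((TransGen.single htc).tail (h ▸ hxt))
    have hxt' : x ≠ t := fun h => hG t (TransGen.single (h ▸ hxt))
    by_cases hadj : G x c ∨ G c x
    · rcases hadj with h | h
      · exact h
      · exact absurd ((TransGen.single h).tail hxt |>.tail htc) (hG c)
    · push_neg at hadj
      exfalso
      -- v-structure (x, t, c) in D but not in G
      have hDxt : D x t := by
        rcases (hskel x t).1 (Or.inl hxt) with h | h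
        · exact h
        · exact absurd h (hsink x)
      have hDct : D c t := by
        rcases (hskel c t).1 (Or.inr htc) with h | h
        · exact h
        · exact absurd h (hsink c)
      have hDnadj : ¬ D x c ∧ ¬ D c x := by
        have := (hskel x c).not.1 (by tauto)
        exact ⟨fun h => this (Or.inl h), fun h => this (Or.inr h)⟩
      have := (hvstr x t c).2 ⟨hDxt, hDct, hxc', hDnadj.1, hDnadj.2⟩
      exact hct this.2.1
  · intro y hyc hyt
    have hyc' : y ≠ c := fun h => hG c (TransGen.single (h ▸ hyc))
    by_cases hadj : G y t ∨ G t y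
    · rcases hadj with h | h
      · exact h
      · exact absurd (TransGen.single hyc) (hmin y h)
    · push_neg at hadj
      exfalso
      -- v-structure (t, c, y) in G, transfer to D: D t c contradicts sink
      have := (hvstr t c y).1 ⟨htc, hyc, fun h => hyt h.symm, fun h => hadj.2 h, fun h => hadj.1 h⟩
      exact hsink c this.1
end Graph


section Rev
variable {V : Type} [Fintype V] [DecidableEq V]








lemma sum_two_pts {a b : V} (hab : a ≠ b) (f : V → ℝ)
    (hf : ∀ k, k ≠ a → k ≠ b → f k = 0) :
    ∑ k, f k = f a + f b := by
  rw [← Finset.sum_pair hab]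
  exact (Finset.sum_subset (Finset.subset_univ _)
    (fun x _ hx => hf x (fun h => hx (by simp [h])) (fun h => hx (by simp [h])))).symm

lemma sum_one_pt {i : V} (f : V → ℝ) (hf : ∀ k, k ≠ i → f k = 0) :
    ∑ k, f k = f i :=
  Finset.sum_eq_single i (fun k _ hk => hf k hk) (by simp)


lemma M_entry {a b : V} (hab : a ≠ b) (β δ : ℝ) (i j : V) :
    (1 + Matrix.single b a β - Matrix.single a b δ - Matrix.single a a (δ*β)) i j =
      (if i = a then (if j = a then 1 - δ*β else if j = b then -δ else 0)
      else if i = b then (if j = a then β else if j = b then 1 else 0)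
      else (if i = j then 1 else 0)) := by
  simp only [Matrix.sub_apply, Matrix.add_apply, Matrix.one_apply, Matrix.single,
    Matrix.of_apply]
  by_cases hia : i = a <;> by_cases hib : i = b <;> by_cases hja : j = a <;>
    by_cases hjb : j = b <;>
    simp only [hia, hib, hja, hjb, if_true, if_false, eq_self_iff_true, true_and, and_true,
      false_and, and_false, if_neg, if_pos] <;>
    first
      | (exfalso; exact hab (by grind))
      | (norm_num
         <;> simp_all [eq_comm, Ne.symm]
         <;> try ring)


lemma row_mul_two {M C : Matrix V V ℝ} {a b : V} (hab : a ≠ b) {i : V} {x y : ℝ}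
    (hrow : ∀ k, M i k = if k = a then x else if k = b then y else 0) (j : V) :
    (M * C) i j = x * C a j + y * C b j := by
  rw [Matrix.mul_apply]
  have hterm : ∀ k, M i k * C k j =
      (if k = a then x * C a j else 0) + (if k = b then y * C b j else 0) := by
    intro k
    rw [hrow]
    by_cases hka : k = a
    · subst hka; rw [if_pos rfl, if_pos rfl, if_neg hab, add_zero]
    · rw [if_neg hka, if_neg hka]
      by_cases hkb : k = b
      · subst hkb; rw [if_pos rfl, if_pos rfl, zero_add]
      · rw [if_neg hkb, if_neg hkb, zero_mul, add_zero]
  simp only [hterm]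
  rw [Finset.sum_add_distrib, Finset.sum_ite_eq' Finset.univ a, Finset.sum_ite_eq' Finset.univ b]
  simp

lemma row_mul_id {M C : Matrix V V ℝ} {i : V}
    (hrow : ∀ k, M i k = if i = k then 1 else 0) (j : V) :
    (M * C) i j = C i j := by
  rw [Matrix.mul_apply]
  have hterm : ∀ k, M i k * C k j = if i = k then C k j else 0 := by
    intro k
    rw [hrow]
    by_cases h : i = k <;> simp [h]
  simp only [hterm]
  rw [Finset.sum_ite_eq Finset.univ i]
  simp

lemma reversal_step {B Ω : Matrix V V ℝ} {G : V → V → Prop} {a b : V}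
    (hG : macyc G) (hcmp : mcompat B G) (hΩ : mdpos Ω) (hab : G a b)
    (hc1 : ∀ x, G x a → G x b) (hc2 : ∀ y, G y b → y ≠ a → G y a) :
    ∃ B' Ω' : Matrix V V ℝ,
      mcompat B' (grev G a b) ∧ mdpos Ω' ∧ mcov B' Ω' = mcov B Ω := by
  have hab' : a ≠ b := fun h => hG a (TransGen.single (h ▸ hab))
  have hBaa : B a a = 0 := diag_zero_of_compat hG hcmp a
  have hBbb : B b b = 0 := diag_zero_of_compat hG hcmp b
  have hBab : B a b = 0 := by
    by_contra h
    exact hG a ((TransGen.single hab).tail (hcmp a b h))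
  have hΩdiag : Ω = diagonal (fun i => Ω i i) := by
    ext i j
    by_cases hij : i = j
    · subst hij; simp [diagonal_apply]
    · rw [hΩ.1 hij, diagonal_apply, if_neg hij]
  obtain ⟨β, hβ⟩ : ∃ x : ℝ, B b a = x := ⟨_, rfl⟩
  obtain ⟨ωa, hωa⟩ : ∃ x : ℝ, Ω a a = x := ⟨_, rfl⟩
  obtain ⟨ωb, hωb⟩ : ∃ x : ℝ, Ω b b = x := ⟨_, rfl⟩
  have hωapos : 0 < ωa := hωa ▸ hΩ.2 a
  have hωbpos : 0 < ωb := hωb ▸ hΩ.2 b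
  obtain ⟨v, hv⟩ : ∃ x : ℝ, β^2 * ωa + ωb = x := ⟨_, rfl⟩
  have hvpos : 0 < v := by rw [← hv]; positivity
  obtain ⟨δ, hδ⟩ : ∃ x : ℝ, β * ωa / v = x := ⟨_, rfl⟩
  have hδv : δ * v = β * ωa := by rw [← hδ]; exact div_mul_cancel₀ _ (ne_of_gt hvpos)
  have h1mδβ : 1 - δ * β = ωb / v := by
    rw [← hδ]
    field_simp
    nlinarith [hv]
  obtain ⟨M, hM⟩ : ∃ M : Matrix V V ℝ,
      M = 1 + Matrix.single b a β - Matrix.single a b δ - Matrix.single a a (δ*β) := ⟨_, rfl⟩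
  -- entries of M
  have hMapply : ∀ i j, M i j =
      if i = a then (if j = a then 1 - δ*β else if j = b then -δ else 0)
      else if i = b then (if j = a then β else if j = b then 1 else 0)
      else (if i = j then 1 else 0) := by
    intro i j
    rw [hM]
    exact M_entry hab' β δ i j
  -- M is a unit
  have hMunit : IsUnit M := by
    have e1 : (1 + Matrix.single b a β) * (1 - Matrix.single b a β) = 1 := by
      have : Matrix.single b a β * Matrix.single b a β = 0 :=
        by simp [hab']
      rw [mul_sub, add_mul, add_mul, this]
      noncomm_ring
    have e1' : (1 - Matrix.single b a β) * (1 + Matrix.single b a β) = 1 := by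
      have : Matrix.single b a β * Matrix.single b a β = 0 :=
        by simp [hab']
      rw [sub_mul, mul_add, mul_add, this]
      noncomm_ring
    have e2 : (1 - Matrix.single a b δ) * (1 + Matrix.single a b δ) = 1 := by
      have : Matrix.single a b δ * Matrix.single a b δ = 0 :=
        by simp [Ne.symm hab']
      rw [sub_mul, mul_add, mul_add, this]
      noncomm_ring
    have e2' : (1 + Matrix.single a b δ) * (1 - Matrix.single a b δ) = 1 := by
      have : Matrix.single a b δ * Matrix.single a b δ = 0 :=
        by simp [Ne.symm hab']
      rw [mul_sub, add_mul, add_mul, this]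
      noncomm_ring
    have hfact : M = (1 - Matrix.single a b δ) * (1 + Matrix.single b a β) := by
      have : Matrix.single a b δ * Matrix.single b a β = Matrix.single a a (δ*β) :=
        by simp
      rw [sub_mul, mul_add, mul_add, this, hM]
      noncomm_ring
    rw [hfact]
    exact IsUnit.mul ⟨⟨_, _, e2, e2'⟩, rfl⟩ ⟨⟨_, _, e1, e1'⟩, rfl⟩
  -- entries of B tilde
  obtain ⟨Bt, hBt⟩ : ∃ Bt : Matrix V V ℝ, Bt = 1 - M * (1 - B) := ⟨_, rfl⟩
  have hBt_other : ∀ i, i ≠ a → i ≠ b → ∀ j, Bt i j = B i j := by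
    intro i hia hib j
    have hrow : ∀ k, M i k = if i = k then 1 else 0 := by
      intro k; rw [hMapply i k, if_neg hia, if_neg hib]
    rw [hBt, Matrix.sub_apply, row_mul_id hrow, Matrix.sub_apply]
    ring
  have hBt_b : ∀ j, Bt b j = B b j + β * B a j - β * (1 : Matrix V V ℝ) a j := by
    intro j
    have hrow : ∀ k, M b k = if k = a then β else if k = b then 1 else 0 := by
      intro k; rw [hMapply b k, if_neg (Ne.symm hab'), if_pos rfl]
    rw [hBt, Matrix.sub_apply, row_mul_two hab' hrow, Matrix.sub_apply, Matrix.sub_apply]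
    have : (1 : Matrix V V ℝ) b j - (β * ((1 : Matrix V V ℝ) a j - B a j) +
        1 * ((1 : Matrix V V ℝ) b j - B b j)) =
        B b j + β * B a j - β * (1 : Matrix V V ℝ) a j := by ring
    exact this
  have hBt_a : ∀ j, Bt a j = δ*β * (1 : Matrix V V ℝ) a j + (1 - δ*β) * B a j +
      δ * (1 : Matrix V V ℝ) b j - δ * B b j := by
    intro j
    have hrow : ∀ k, M a k = if k = a then 1 - δ*β else if k = b then -δ else 0 := by
      intro k; rw [hMapply a k, if_pos rfl]
    rw [hBt, Matrix.sub_apply, row_mul_two hab' hrow, Matrix.sub_apply, Matrix.sub_apply]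
    ring
  -- compatibility of Bt with the reversed graph
  have hcompat : mcompat Bt (grev G a b) := by
    intro i j hne
    by_cases hia : i = a
    · subst i
      rw [hBt_a j] at hne
      by_cases hjb : j = b
      · exact Or.inr ⟨hjb, rfl⟩
      · by_cases hja : j = a
        · exfalso
          apply hne
          subst j
          rw [Matrix.one_apply_eq, Matrix.one_apply_ne (Ne.symm hab'), hBaa, hβ]
          ring
        · have h1aj : (1 : Matrix V V ℝ) a j = 0 := Matrix.one_apply_ne (fun h => hja h.symm)
          have h1bj : (1 : Matrix V V ℝ) b j = 0 := Matrix.one_apply_ne (fun h => hjb h.symm)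
          rw [h1aj, h1bj] at hne
          have : B a j ≠ 0 ∨ B b j ≠ 0 := by
            by_contra hcon
            push_neg at hcon
            apply hne
            rw [hcon.1, hcon.2]
            ring
          have hGja : G j a := by
            rcases this with h | h
            · exact hcmp a j h
            · exact hc2 j (hcmp b j h) hja
          exact Or.inl ⟨hGja, fun hh => hab' (hh.2)⟩
    · by_cases hib : i = b
      · subst i
        rw [hBt_b j] at hne
        by_cases hja : j = a
        · exfalso
          apply hne
          subst j
          rw [Matrix.one_apply_eq, hBaa, hβ]
          ring
        · have h1aj : (1 : Matrix V V ℝ) a j = 0 := Matrix.one_apply_ne (fun h => hja h.symm)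
          rw [h1aj] at hne
          have : B b j ≠ 0 ∨ B a j ≠ 0 := by
            by_contra hcon
            push_neg at hcon
            apply hne
            rw [hcon.1, hcon.2]
            ring
          have hGjb : G j b := by
            rcases this with h | h
            · exact hcmp b j h
            · exact hc1 j (hcmp a j h)
          exact Or.inl ⟨hGjb, fun hh => hja hh.1⟩
      · rw [hBt_other i hia hib j] at hne
        exact Or.inl ⟨hcmp i j hne, fun hh => hib hh.2⟩
  -- the new noise matrix is diagonal
  obtain ⟨d', hd'⟩ : ∃ d' : V → ℝ, d' = fun i =>
      if i = a then (1 - δ*β)^2 * ωa + δ^2 * ωb else if i = b then v else Ω i i := ⟨_, rfl⟩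
  have hMa_a : M a a = 1 - δ*β := by rw [hMapply]; simp
  have hMa_b : M a b = -δ := by rw [hMapply]; simp [hab', Ne.symm hab']
  have hMb_a : M b a = β := by rw [hMapply]; simp [hab', Ne.symm hab']
  have hMb_b : M b b = 1 := by rw [hMapply]; simp [hab', Ne.symm hab']
  have hMkey : ∀ i j, (M * Ω * Mᵀ) i j = ∑ k, M i k * Ω k k * M j k := by
    intro i j
    conv_lhs => rw [hΩdiag]
    rw [Matrix.mul_apply]
    congr 1
    ext k
    rw [Matrix.mul_diagonal, Matrix.transpose_apply]
  have hMother : ∀ i k, i ≠ a → i ≠ b → M i k = if i = k then 1 else 0 := by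
    intro i k hia hib
    rw [hMapply i k, if_neg hia, if_neg hib]
  have hΩ'eq : M * Ω * Mᵀ = diagonal d' := by
    ext i j
    rw [hMkey, diagonal_apply]
    by_cases hia : i = a
    · subst i
      rw [sum_two_pts hab' _ (fun k hka hkb => by
        rw [hMapply a k, if_pos rfl, if_neg hka, if_neg hkb]; ring)]
      rw [hMa_a, hMa_b, hωa, hωb]
      by_cases hja : j = a
      · subst j
        rw [if_pos rfl]
        simp only [hd', if_true]
        rw [hMa_a, hMa_b]
        ring
      · rw [if_neg (fun h => hja h.symm)]
        by_cases hjb : j = b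
        · subst j
          rw [hMb_a, hMb_b]
          linear_combination (-δ) * hv - hδv
        · rw [hMother j a hja hjb, hMother j b hja hjb, if_neg hja, if_neg hjb]
          ring
    · by_cases hib : i = b
      · subst i
        rw [sum_two_pts hab' _ (fun k hka hkb => by
          rw [hMapply b k, if_neg (Ne.symm hab'), if_pos rfl, if_neg hka, if_neg hkb]; ring)]
        rw [hMb_a, hMb_b, hωa, hωb]
        by_cases hja : j = a
        · subst j
          rw [if_neg (Ne.symm hab'), hMa_a, hMa_b]
          linear_combination (-δ) * hv - hδv
        · by_cases hjb : j = b
          · subst j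
            rw [if_pos rfl]
            simp only [hd', if_true]
            rw [if_neg (Ne.symm hab'), hMb_a, hMb_b]
            linear_combination hv
          · rw [if_neg (fun h => hjb h.symm)]
            rw [hMother j a hja hjb, hMother j b hja hjb, if_neg hja, if_neg hjb]
            ring
      · rw [sum_one_pt _ (fun k hk => by
          rw [hMapply i k, if_neg hia, if_neg hib, if_neg (fun h => hk h.symm)]; ring)]
        rw [hMapply i i, if_neg hia, if_neg hib, if_pos rfl]
        by_cases hji : j = i
        · subst j
          rw [if_pos rfl]
          simp only [hd']
          rw [if_neg hia, if_neg hib, hMapply i i, if_neg hia, if_neg hib, if_pos rfl]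
          ring
        · rw [if_neg (fun h => hji h.symm)]
          by_cases hja : j = a
          · subst j
            rw [hMapply a i, if_pos rfl, if_neg hia, if_neg hib]
            ring
          · by_cases hjb : j = b
            · subst j
              rw [hMapply b i, if_neg (Ne.symm hab'), if_pos rfl, if_neg hia, if_neg hib]
              ring
            · rw [hMother j i hja hjb, if_neg hji]
              ring
  -- positivity of the new noise
  have hdpos : mdpos (diagonal d') := by
    refine ⟨isDiag_diagonal d', fun i => ?_⟩
    rw [diagonal_apply_eq]
    simp only [hd']
    by_cases hia : i = a
    · rw [if_pos hia, h1mδβ]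
      have hq : 0 < ωb / v := div_pos hωbpos hvpos
      have h1 : 0 < (ωb/v)^2 * ωa := mul_pos (pow_pos hq 2) hωapos
      have h2 : 0 ≤ δ^2 * ωb := mul_nonneg (sq_nonneg δ) hωbpos.le
      linarith
    · rw [if_neg hia]
      by_cases hib : i = b
      · rw [if_pos hib]; exact hvpos
      · rw [if_neg hib]; exact hΩ.2 i
  refine ⟨Bt, diagonal d', hcompat, hdpos, ?_⟩
  rw [← hΩ'eq, hBt]
  exact mcov_conj (isUnit_one_sub_of_compat hG hcmp) hMunit

end Rev


def mskel {V : Type} (D D' : V → V → Prop) : Prop :=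
  ∀ a b, (D a b ∨ D b a) ↔ (D' a b ∨ D' b a)

def mvstr {V : Type} (D D' : V → V → Prop) : Prop :=
  ∀ i k j, (D i k ∧ D j k ∧ i ≠ j ∧ ¬ D i j ∧ ¬ D j i) ↔
    (D' i k ∧ D' j k ∧ i ≠ j ∧ ¬ D' i j ∧ ¬ D' j i)

section Sink
variable {V : Type} [Fintype V] [DecidableEq V]



lemma mskel_trans {G G' D : V → V → Prop} (h1 : mskel G G') (h2 : mskel G D) : mskel G' D :=
  fun a b => (h1 a b).symm.trans (h2 a b)
lemma mvstr_trans {G G' D : V → V → Prop} (h1 : mvstr G G') (h2 : mvstr G D) : mvstr G' D :=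
  fun i k j => ((h1 i k j).symm.trans (h2 i k j))

lemma sink_align (n : ℕ) :
    ∀ (B Ω : Matrix V V ℝ) (G D : V → V → Prop) (t : V),
    {j | G t j}.ncard ≤ n →
    macyc G → mcompat B G → mdpos Ω → macyc D →
    mskel G D → mvstr G D → (∀ j, ¬ D t j) →
    ∃ (B₁ Ω₁ : Matrix V V ℝ) (G₁ : V → V → Prop), macyc G₁ ∧ mcompat B₁ G₁ ∧ mdpos Ω₁ ∧
      mskel G₁ D ∧ mvstr G₁ D ∧ (∀ j, ¬ G₁ t j) ∧
      mcov B₁ Ω₁ = mcov B Ω := by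
  induction n with
  | zero =>
    intro B Ω G D t hcard hG hcmp hΩ hD hskel hvstr hsink
    refine ⟨B, Ω, G, hG, hcmp, hΩ, hskel, hvstr, ?_, rfl⟩
    intro j hj
    have : 0 < {j | G t j}.ncard := (Set.ncard_pos (Set.toFinite _)).2 ⟨j, hj⟩
    omega
  | succ n ih =>
    intro B Ω G D t hcard hG hcmp hΩ hD hskel hvstr hsink
    by_cases hch : ∀ j, ¬ G t j
    · exact ⟨B, Ω, G, hG, hcmp, hΩ, hskel, hvstr, hch, rfl⟩
    · push_neg at hch
      obtain ⟨c₀, hc₀⟩ := hch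
      -- pick a minimal child c of t
      haveI : IsTrans V (TransGen G) := ⟨fun _ _ _ => TransGen.trans⟩
      haveI : IsIrrefl V (TransGen G) := ⟨hG⟩
      obtain ⟨c, hcS, hcmin⟩ :=
        (Finite.wellFounded_of_trans_of_irrefl (TransGen G)).has_min {y | G t y} ⟨c₀, hc₀⟩
      have hmin : ∀ y, G t y → ¬ TransGen G y c := fun y hy ht => hcmin y hy ht
      obtain ⟨hc1, hc2⟩ := covered_of_minimal hG hD hskel hvstr hsink hcS hmin
      obtain ⟨B', Ω', hcmp', hΩ', heq'⟩ := reversal_step hG hcmp hΩ hcS hc1 hc2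
      have hG' : macyc (grev G t c) := grev_acyclic hG hcS hc2
      have hskel' : mskel (grev G t c) D := mskel_trans (grev_skeleton hG hcS) hskel
      have hvstr' : mvstr (grev G t c) D := mvstr_trans (grev_vstructs hG hcS hc1 hc2) hvstr
      have htc' : t ≠ c := fun h => hG t (TransGen.single (h ▸ hcS))
      have hchild : {j | grev G t c t j} = {j | G t j} \ {c} := by
        ext j
        simp only [Set.mem_setOf_eq, Set.mem_diff, Set.mem_singleton_iff, grev]
        constructor
        · rintro (⟨h1, h2⟩ | ⟨h1, h2⟩)
          · exact ⟨h1, fun h => h2 ⟨trivial, h⟩⟩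
          · exact absurd h1 htc'
        · rintro ⟨h1, h2⟩
          exact Or.inl ⟨h1, fun h => h2 h.2⟩
      have hcard' : {j | grev G t c t j}.ncard ≤ n := by
        rw [hchild]
        have := Set.ncard_diff_singleton_lt_of_mem hcS (Set.toFinite _)
        omega
      obtain ⟨B₁, Ω₁, G₁, a1, a2, a3, a4, a5, a6, a7⟩ :=
        ih B' Ω' (grev G t c) D t hcard' hG' hcmp' hΩ' hD hskel' hvstr' hsink
      exact ⟨B₁, Ω₁, G₁, a1, a2, a3, a4, a5, a6, a7.trans heq'⟩
end Sink




section Reindex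
variable {X Y : Type} [Fintype X] [DecidableEq X] [Fintype Y] [DecidableEq Y]

lemma one_sub_submatrix (e : X ≃ Y) (B : Matrix Y Y ℝ) :
    (1 : Matrix X X ℝ) - B.submatrix e e = (1 - B).submatrix e e := by
  ext i j
  simp only [Matrix.sub_apply, Matrix.submatrix_apply, Matrix.one_apply,
    EmbeddingLike.apply_eq_iff_eq]

lemma inv_submatrix (e : X ≃ Y) (A : Matrix Y Y ℝ) (hA : IsUnit A) :
    (A.submatrix e e)⁻¹ = A⁻¹.submatrix e e := by
  apply Matrix.inv_eq_right_inv
  have : A.submatrix (⇑e) (⇑e) * A⁻¹.submatrix (⇑e) (⇑e) = (A * A⁻¹).submatrix (⇑e) (⇑e) :=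
    Matrix.submatrix_mul_equiv A A⁻¹ (⇑e) e (⇑e)
  rw [this, Matrix.mul_nonsing_inv A ((Matrix.isUnit_iff_isUnit_det A).1 hA),
    Matrix.submatrix_one_equiv]

lemma mcov_submatrix (e : X ≃ Y) (B Ω : Matrix Y Y ℝ) (hB : IsUnit (1 - B)) :
    mcov (B.submatrix e e) (Ω.submatrix e e) = (mcov B Ω).submatrix e e := by
  unfold mcov
  rw [one_sub_submatrix e B, inv_submatrix e _ hB, Matrix.transpose_submatrix,
    Matrix.submatrix_mul_equiv, Matrix.submatrix_mul_equiv]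
end Reindex

section Blocks
variable {W : Type} [Fintype W] [DecidableEq W]

lemma one_sub_fromBlocks (B₀ : Matrix W W ℝ) (r : Matrix Unit W ℝ) :
    (1 : Matrix (W ⊕ Unit) (W ⊕ Unit) ℝ) - fromBlocks B₀ 0 r 0 =
      fromBlocks (1 - B₀) 0 (-r) 1 := by
  rw [← fromBlocks_one]
  ext (i | u) (j | u') <;>
    simp [Matrix.sub_apply, fromBlocks]

lemma mcov_blocks (B₀ Ω₀ : Matrix W W ℝ) (r : Matrix Unit W ℝ) (ω : Matrix Unit Unit ℝ)
    (h : IsUnit (1 - B₀)) :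
    mcov (fromBlocks B₀ 0 r 0) (fromBlocks Ω₀ 0 0 ω) =
      fromBlocks (mcov B₀ Ω₀) (mcov B₀ Ω₀ * rᵀ) (r * mcov B₀ Ω₀)
        (r * mcov B₀ Ω₀ * rᵀ + ω) := by
  have hdet : IsUnit (1 - B₀).det := (Matrix.isUnit_iff_isUnit_det _).1 h
  have h2 : ((fromBlocks (1 - B₀) 0 (-r) 1 : Matrix (W ⊕ Unit) (W ⊕ Unit) ℝ))⁻¹ =
      fromBlocks (1 - B₀)⁻¹ 0 (r * (1 - B₀)⁻¹) 1 := by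
    apply Matrix.inv_eq_right_inv
    rw [fromBlocks_multiply]
    rw [Matrix.mul_nonsing_inv _ hdet]
    have hz : (-r) * (1 - B₀)⁻¹ + (1 : Matrix Unit Unit ℝ) * (r * (1 - B₀)⁻¹) = 0 := by
      rw [Matrix.one_mul, Matrix.neg_mul]
      exact neg_add_cancel _
    rw [hz]
    simp [fromBlocks_one]
  unfold mcov
  rw [one_sub_fromBlocks, h2, fromBlocks_transpose, fromBlocks_multiply, fromBlocks_multiply]
  simp only [Matrix.mul_zero, Matrix.zero_mul, Matrix.mul_one, Matrix.one_mul,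
    add_zero, zero_add, Matrix.transpose_zero, Matrix.transpose_one, Matrix.transpose_mul]
  congr 1 <;> simp [Matrix.mul_assoc]
end Blocks

section MainInd

lemma main_aux (n : ℕ) :
    ∀ (V : Type) [Fintype V] [DecidableEq V], Fintype.card V = n →
    ∀ (B Ω : Matrix V V ℝ) (G D : V → V → Prop), macyc G → mcompat B G → mdpos Ω →
      macyc D → mskel G D → mvstr G D →
      ∃ B' Ω' : Matrix V V ℝ, mcompat B' D ∧ mdpos Ω' ∧ mcov B Ω = mcov B' Ω' := by
  induction n using Nat.strong_induction_on with
  | _ n ih =>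
  intro V instF instD hcard B Ω G D hG hcmp hΩ hD hskel hvstr
  rcases Nat.eq_zero_or_pos n with hn | hn
  · haveI : IsEmpty V := Fintype.card_eq_zero_iff.mp (by omega)
    exact ⟨B, Ω, fun i _ _ => (IsEmpty.false i).elim, hΩ, rfl⟩
  -- find a sink t of D
  have hne : Nonempty V := Fintype.card_pos_iff.mp (by omega)
  haveI : IsTrans V (TransGen (Function.swap D)) := ⟨fun _ _ _ => TransGen.trans⟩
  haveI : IsIrrefl V (TransGen (Function.swap D)) :=
    ⟨fun i h => hD i (Relation.transGen_swap.mp h)⟩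
  obtain ⟨t, -, htmin⟩ :=
    (Finite.wellFounded_of_trans_of_irrefl (TransGen (Function.swap D))).has_min
      Set.univ ⟨hne.some, trivial⟩
  have hsink : ∀ j, ¬ D t j := fun j hj =>
    htmin j trivial (TransGen.single (show Function.swap D j t from hj))
  -- align: make t a sink of the generating graph too
  obtain ⟨B₁, Ω₁, G₁, hG₁, hcmp₁, hΩ₁, hskel₁, hvstr₁, hGsink, heq₁⟩ :=
    sink_align ({j | G t j}.ncard) B Ω G D t le_rfl hG hcmp hΩ hD hskel hvstr hsink
  have hpar : ∀ j, G₁ j t → D j t := by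
    intro j hj
    rcases (hskel₁ j t).1 (Or.inl hj) with h | h
    · exact h
    · exact absurd h (hsink j)
  -- the equiv V ≃ W ⊕ Unit
  obtain ⟨e, he1, he2⟩ : ∃ e : ({x : V // x ≠ t} ⊕ Unit) ≃ V,
      (∀ x, e (Sum.inl x) = x.1) ∧ (∀ u, e (Sum.inr u) = t) := by
    refine ⟨{ toFun := Sum.elim Subtype.val (fun _ => t)
              invFun := fun v => if h : v = t then Sum.inr () else Sum.inl ⟨v, h⟩
              left_inv := ?_
              right_inv := ?_ }, fun x => rfl, fun u => rfl⟩
    · rintro (⟨x, hx⟩ | u)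
      · simp [dif_neg hx, hx]
      · simp
    · intro v
      by_cases h : v = t
      · subst h; simp
      · simp [dif_neg h]
  have hcardW : Fintype.card {x : V // x ≠ t} < n := by
    rw [← hcard]
    exact Fintype.card_subtype_lt (x := t) (fun h => h rfl)
  -- blocks
  obtain ⟨B₀, hB₀⟩ : ∃ X : Matrix {x : V // x ≠ t} {x : V // x ≠ t} ℝ,
      X = Matrix.of (fun i j => B₁ i.1 j.1) := ⟨_, rfl⟩
  obtain ⟨r, hr⟩ : ∃ X : Matrix Unit {x : V // x ≠ t} ℝ,
      X = Matrix.of (fun _ j => B₁ t j.1) := ⟨_, rfl⟩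
  obtain ⟨Ω₀, hΩ₀⟩ : ∃ X : Matrix {x : V // x ≠ t} {x : V // x ≠ t} ℝ,
      X = Matrix.of (fun i j => Ω₁ i.1 j.1) := ⟨_, rfl⟩
  obtain ⟨ω, hω⟩ : ∃ X : Matrix Unit Unit ℝ,
      X = Matrix.of (fun _ _ => Ω₁ t t) := ⟨_, rfl⟩
  have hBcol : ∀ i, B₁ i t = 0 := by
    intro i
    by_contra h
    exact hGsink i (hcmp₁ i t h)
  have hBv : B₁.submatrix e e = fromBlocks B₀ 0 r 0 := by
    ext a c
    rcases a with i | u <;> rcases c with j | u' <;>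
      simp only [Matrix.submatrix_apply, he1, he2, Matrix.fromBlocks_apply₁₁,
        Matrix.fromBlocks_apply₁₂, Matrix.fromBlocks_apply₂₁, Matrix.fromBlocks_apply₂₂,
        hB₀, hr, Matrix.of_apply, Matrix.zero_apply] <;>
      first | rfl | exact hBcol _
  have hΩv : Ω₁.submatrix e e = fromBlocks Ω₀ 0 0 ω := by
    ext a c
    rcases a with i | u <;> rcases c with j | u' <;>
      simp only [Matrix.submatrix_apply, he1, he2, Matrix.fromBlocks_apply₁₁,
        Matrix.fromBlocks_apply₁₂, Matrix.fromBlocks_apply₂₁, Matrix.fromBlocks_apply₂₂,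
        hΩ₀, hω, Matrix.of_apply, Matrix.zero_apply] <;>
      first
        | rfl
        | exact hΩ₁.1 i.2
        | exact hΩ₁.1 (fun h => j.2 h.symm)
  -- restricted graphs and hypotheses
  have hG' : macyc (fun i j : {x : V // x ≠ t} => G₁ i.1 j.1) := by
    intro i h
    exact hG₁ i.1 (TransGen.lift Subtype.val (fun _ _ hh => hh) _ _ h)
  have hD' : macyc (fun i j : {x : V // x ≠ t} => D i.1 j.1) := by
    intro i h
    exact hD i.1 (TransGen.lift Subtype.val (fun _ _ hh => hh) _ _ h)
  have hcmp₀ : mcompat B₀ (fun i j : {x : V // x ≠ t} => G₁ i.1 j.1) := by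
    intro i j h
    rw [hB₀] at h
    exact hcmp₁ i.1 j.1 h
  have hΩ₀pos : mdpos Ω₀ := by
    constructor
    · intro i j hij
      rw [hΩ₀]
      exact hΩ₁.1 (fun h => hij (Subtype.ext h))
    · intro i
      rw [hΩ₀]
      exact hΩ₁.2 i.1
  have hskel' : mskel (fun i j : {x : V // x ≠ t} => G₁ i.1 j.1)
      (fun i j : {x : V // x ≠ t} => D i.1 j.1) := fun i j => hskel₁ i.1 j.1
  have hvstr' : mvstr (fun i j : {x : V // x ≠ t} => G₁ i.1 j.1)
      (fun i j : {x : V // x ≠ t} => D i.1 j.1) := by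
    intro i k j
    have hiff : ∀ x y : {x : V // x ≠ t}, x ≠ y ↔ x.1 ≠ y.1 :=
      fun x y => ⟨fun h hc => h (Subtype.ext hc), fun h hc => h (congrArg Subtype.val hc)⟩
    constructor
    · rintro ⟨h1, h2, h3, h4, h5⟩
      obtain ⟨g1, g2, g3, g4, g5⟩ := (hvstr₁ i.1 k.1 j.1).1 ⟨h1, h2, (hiff i j).1 h3, h4, h5⟩
      exact ⟨g1, g2, (hiff i j).2 g3, g4, g5⟩
    · rintro ⟨h1, h2, h3, h4, h5⟩
      obtain ⟨g1, g2, g3, g4, g5⟩ := (hvstr₁ i.1 k.1 j.1).2 ⟨h1, h2, (hiff i j).1 h3, h4, h5⟩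
      exact ⟨g1, g2, (hiff i j).2 g3, g4, g5⟩
  obtain ⟨B₀', Ω₀', hcmp₀', hΩ₀', heq₀⟩ :=
    ih (Fintype.card {x : V // x ≠ t}) hcardW {x : V // x ≠ t} rfl B₀ Ω₀ _ _
      hG' hcmp₀ hΩ₀pos hD' hskel' hvstr'
  -- assembly
  have hDv : macyc (fun x y : ({x : V // x ≠ t} ⊕ Unit) => D (e x) (e y)) := by
    intro x h
    exact hD (e x) (TransGen.lift e (fun _ _ hh => hh) _ _ h)
  have hcmpv : mcompat (fromBlocks B₀' 0 r 0)
      (fun x y : ({x : V // x ≠ t} ⊕ Unit) => D (e x) (e y)) := by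
    rintro (i | u) (j | u') h
    · rw [Matrix.fromBlocks_apply₁₁] at h
      rw [he1, he1]
      exact hcmp₀' i j h
    · rw [Matrix.fromBlocks_apply₁₂] at h
      exact absurd rfl h
    · rw [Matrix.fromBlocks_apply₂₁, hr] at h
      rw [he1, he2]
      exact hpar j.1 (hcmp₁ t j.1 h)
    · rw [Matrix.fromBlocks_apply₂₂] at h
      exact absurd rfl h
  have hU₁ : IsUnit (1 - B₁) := isUnit_one_sub_of_compat hG₁ hcmp₁
  have hU₀ : IsUnit (1 - B₀) := isUnit_one_sub_of_compat hG' hcmp₀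
  have hU₀' : IsUnit (1 - B₀') := isUnit_one_sub_of_compat hD' hcmp₀'
  have hUv : IsUnit (1 - fromBlocks B₀' 0 r 0) := isUnit_one_sub_of_compat hDv hcmpv
  have hres : ∀ X : Matrix V V ℝ, (X.submatrix e e).submatrix e.symm e.symm = X := by
    intro X
    ext i j
    simp [Matrix.submatrix_apply]
  -- covariance chain
  have hchain1 : (mcov B₁ Ω₁).submatrix e e =
      fromBlocks (mcov B₀ Ω₀) (mcov B₀ Ω₀ * rᵀ) (r * mcov B₀ Ω₀)
        (r * mcov B₀ Ω₀ * rᵀ + ω) := by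
    rw [← mcov_submatrix e B₁ Ω₁ hU₁, hBv, hΩv, mcov_blocks B₀ Ω₀ r ω hU₀]
  have hchain2 : mcov (fromBlocks B₀' 0 r 0) (fromBlocks Ω₀' 0 0 ω) =
      fromBlocks (mcov B₀ Ω₀) (mcov B₀ Ω₀ * rᵀ) (r * mcov B₀ Ω₀)
        (r * mcov B₀ Ω₀ * rᵀ + ω) := by
    rw [mcov_blocks B₀' Ω₀' r ω hU₀', ← heq₀]
  refine ⟨(fromBlocks B₀' 0 r 0).submatrix e.symm e.symm,
    (fromBlocks Ω₀' 0 0 ω).submatrix e.symm e.symm, ?_, ?_, ?_⟩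
  · intro i j h
    rw [Matrix.submatrix_apply] at h
    have := hcmpv _ _ h
    simp only [Equiv.apply_symm_apply] at this
    exact this
  · constructor
    · intro i j hij
      rw [Matrix.submatrix_apply]
      have hne' : e.symm i ≠ e.symm j := fun h => hij (e.symm.injective h)
      rcases hi : e.symm i with x | u <;> rcases hj : e.symm j with y | u'
      · rw [Matrix.fromBlocks_apply₁₁]
        exact hΩ₀'.1 (fun h => hne' (by rw [hi, hj, h]))
      · rw [Matrix.fromBlocks_apply₁₂]; rfl
      · rw [Matrix.fromBlocks_apply₂₁]; rfl
      · exact absurd (by rw [hi, hj]) hne'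
    · intro i
      rw [Matrix.submatrix_apply]
      rcases hi : e.symm i with x | u
      · rw [Matrix.fromBlocks_apply₁₁]
        exact hΩ₀'.2 x
      · rw [Matrix.fromBlocks_apply₂₂, hω]
        exact hΩ₁.2 t
  · calc mcov B Ω = mcov B₁ Ω₁ := heq₁.symm
      _ = ((mcov B₁ Ω₁).submatrix e e).submatrix e.symm e.symm := (hres _).symm
      _ = (mcov (fromBlocks B₀' 0 r 0) (fromBlocks Ω₀' 0 0 ω)).submatrix e.symm e.symm := by
          rw [hchain1, hchain2]
      _ = mcov ((fromBlocks B₀' 0 r 0).submatrix e.symm e.symm)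
            ((fromBlocks Ω₀' 0 0 ω).submatrix e.symm e.symm) :=
          (mcov_submatrix e.symm _ _ hUv).symm
end MainInd

end MEQ

/-- Markov equivalence implies distributional equivalence: if a DAG `𝒟` has the same
skeleton and v-structures as `G(B)` (i.e., is Markov equivalent to it), then there is a
model `(B', Ω')` with `B'` compatible with `𝒟` entailing the same covariance. -/
theorem markov_equivalent_is_distribution_equivalent
    {p : ℕ} (B Ω : Matrix (Fin p) (Fin p) ℝ)
    (hB : IsDagMatrix B) (hΩ : DiagPos Ω)
    (D : Fin p → Fin p → Prop) (hD : IsAcyclic D)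
    (hskel : SameSkeleton (graphOf B) D)
    (hvstr : SameVStructs (graphOf B) D) :
    ∃ B' Ω' : Matrix (Fin p) (Fin p) ℝ,
      Compatible B' D ∧ DiagPos Ω' ∧ CovOf B Ω = CovOf B' Ω' := by
  obtain ⟨σ, hσ⟩ := hB
  have hGacyc : MEQ.macyc (graphOf B) := by
    intro i hi
    have hmono : ∀ x y : Fin p, graphOf B x y → σ x < σ y := by
      intro x y hxy
      by_contra hle
      exact hxy (hσ y x (le_of_not_gt hle))
    have h2 := Relation.TransGen.lift (p := fun a b : Fin p => a < b) σ hmono _ _ hi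
    rw [Relation.transGen_eq_self (r := fun a b : Fin p => a < b)] at h2
    exact lt_irrefl _ h2
  have hcmpB : MEQ.mcompat B (graphOf B) := fun _ _ h => h
  obtain ⟨B', Ω', h1, h2, h3⟩ :=
    MEQ.main_aux (Fintype.card (Fin p)) (Fin p) rfl B Ω (graphOf B) D
      hGacyc hcmpB hΩ hD hskel hvstr
  exact ⟨B', Ω', h1, h2, h3⟩
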